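/- Suppose X, V, H, R are as in the abstract Pestov setup: X* = -X, [X,V] = -H, [X,H] = RV, and H*V - V*H = -(n-1)X, all acting on a common invariant domain D in a Hilbert space, with adjoints well-defined on D. Then for every u ∈ D, ‖VXu‖² - ‖XVu‖² = (n-1)‖Xu‖² - ⟨RVu, Vu⟩. -/
import Mathlib

open scoped InnerProductSpace

theorem stmt4 {E : Type*} [NormedAddCommGroup E] [InnerProductSpace ℂ E]
    (n : ℕ) (X V H R Xs Vs Hs : E →ₗ[ℂ] E)
    (hXadj : ∀ u v : E, ⟪X u, v⟫_ℂ = ⟪u, Xs v⟫_ℂ)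
    (hXs : Xs = -X)
    (hVadj : ∀ u v : E, ⟪V u, v⟫_ℂ = ⟪u, Vs v⟫_ℂ)
    (hHadj : ∀ u v : E, ⟪H u, v⟫_ℂ = ⟪u, Hs v⟫_ℂ)
    (hH : H = -(X ∘ₗ V - V ∘ₗ X))
    (hXH : X ∘ₗ H - H ∘ₗ X = R ∘ₗ V)
    (hHV : Hs ∘ₗ V - Vs ∘ₗ H = (-((n : ℂ) - 1)) • X) :
    ∀ u : E, ‖V (X u)‖ ^ 2 - ‖X (V u)‖ ^ 2
      = ((n : ℝ) - 1) * ‖X u‖ ^ 2 - (⟪R (V u), V u⟫_ℂ).re := by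
  intro u
  have f1 : ∀ a b : E, ⟪X a, b⟫_ℂ = -⟪a, X b⟫_ℂ := by
    intro a b
    rw [hXadj, hXs]
    simp
  have hHu : ∀ w : E, H w = V (X w) - X (V w) := by
    intro w
    rw [hH]
    simp
  have hXHu : ∀ w : E, X (H w) = H (X w) + R (V w) := by
    intro w
    have h := LinearMap.congr_fun hXH w
    simp only [LinearMap.sub_apply, LinearMap.comp_apply] at h
    linear_combination (norm := module) h
  have hVsHu : ∀ w : E, Vs (H w) = Hs (V w) + ((n : ℂ) - 1) • X w := by
    intro w
    have h := LinearMap.congr_fun hHV w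
    simp only [LinearMap.sub_apply, LinearMap.comp_apply, LinearMap.smul_apply] at h
    linear_combination (norm := module) -h
  have e1 : V (X u) = X (V u) + H u := by rw [hHu]; abel
  have t1 : ⟪H u, V (X u)⟫_ℂ = ⟪u, Hs (V (X u))⟫_ℂ := hHadj u _
  have t2 : ⟪X (V u), H u⟫_ℂ
      = -⟪u, Hs (V (X u))⟫_ℂ + ((n : ℂ) - 1) * ⟪X u, X u⟫_ℂ - ⟪V u, R (V u)⟫_ℂ := by
    rw [f1, hXHu, inner_add_right, hVadj, hVsHu, inner_add_right, inner_smul_right]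
    have hx : ⟪u, X (X u)⟫_ℂ = -⟪X u, X u⟫_ℂ := by
      linear_combination f1 u (X u)
    rw [hx]
    ring
  have expand : ⟪V (X u), V (X u)⟫_ℂ
      = ⟪X (V u), X (V u)⟫_ℂ + ⟪X (V u), H u⟫_ℂ + (⟪H u, X (V u)⟫_ℂ + ⟪H u, H u⟫_ℂ) := by
    conv_lhs => rw [e1]
    rw [inner_add_left, inner_add_right, inner_add_right]
  have collapse : ⟪H u, X (V u)⟫_ℂ + ⟪H u, H u⟫_ℂ = ⟪H u, V (X u)⟫_ℂ := by
    rw [← inner_add_right, ← e1]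
  have key : ⟪V (X u), V (X u)⟫_ℂ - ⟪X (V u), X (V u)⟫_ℂ
      = ((n : ℂ) - 1) * ⟪X u, X u⟫_ℂ - ⟪V u, R (V u)⟫_ℂ := by
    rw [expand, collapse, t1, t2]
    ring
  have hre := congrArg Complex.re key
  have hVR : (⟪V u, R (V u)⟫_ℂ).re = (⟪R (V u), V u⟫_ℂ).re := by
    rw [← inner_conj_symm (R (V u)) (V u), Complex.conj_re]
  rw [inner_self_eq_norm_sq_to_K (𝕜 := ℂ) (V (X u)),
      inner_self_eq_norm_sq_to_K (𝕜 := ℂ) (X (V u)),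
      inner_self_eq_norm_sq_to_K (𝕜 := ℂ) (X u)] at hre
  simp only [Complex.sub_re, Complex.mul_re, Complex.ofReal_pow] at hre
  simpa [hVR, Complex.sub_re, Complex.mul_re, ← Complex.ofReal_pow] using hre
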